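/- Let A1, ..., A_{n+1} be affinely independent points in ℝ^n, P a point with barycentric coordinates p_i ≠ 0, and S the unit sphere centered at P. Let A_i* be the S-pole of the sideplane h_i opposite A_i. For a point Z* ≠ P with barycentric coordinates z_1*, ..., z_{n+1}* with respect to (A_1*,...,A_{n+1}*), the polar hyperplane of Z* with respect to S meets the line A_1A_2 at the point with homogeneous barycentric coordinates [p_1/z_1* : -p_2/z_2* : 0 : ... : 0] with respect to (A_1,...,A_{n+1}), provided z_1*, z_2* ≠ 0 and p_1/z_1* ≠ p_2/z_2*. -/

import Mathlib

/-- The polar hyperplane of `Z* = ∑ zᵢ* • Aᵢ*` with respect to the unit sphere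
centered at `P` meets the line `A₁A₂` exactly at the point with homogeneous
barycentric coordinates `[p₁/z₁* : -p₂/z₂* : 0 : ⋯ : 0]`. -/
theorem polar_hyperplane_meets_sideline (n : ℕ) (hn : 1 < n)
    (A : Fin (n + 1) → EuclideanSpace ℝ (Fin n)) (hA : AffineIndependent ℝ A)
    (p : Fin (n + 1) → ℝ) (hp : ∀ i, p i ≠ 0) (hpsum : ∑ i, p i = 1)
    (P : EuclideanSpace ℝ (Fin n)) (hP : P = ∑ i, p i • A i)
    (Astar : Fin (n + 1) → EuclideanSpace ℝ (Fin n))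
    (hpolar : ∀ i, (affineSpan ℝ (A '' {i}ᶜ) : Set (EuclideanSpace ℝ (Fin n))) =
      {R | inner ℝ (R - P) (Astar i - P) = (1 : ℝ)})
    (z : Fin (n + 1) → ℝ) (hzsum : ∑ i, z i = 1)
    (Zstar : EuclideanSpace ℝ (Fin n)) (hZ : Zstar = ∑ i, z i • Astar i)
    (hZP : Zstar ≠ P)
    (hz0 : z 0 ≠ 0) (hz1 : z 1 ≠ 0) (hne : p 0 / z 0 ≠ p 1 / z 1) :
    ∀ t : ℝ,
      inner ℝ ((t • A 0 + (1 - t) • A 1) - P) (Zstar - P) = (1 : ℝ) ↔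
        t = (p 0 / z 0) / (p 0 / z 0 - p 1 / z 1) := by
  intro t
  -- off-diagonal inner products
  have key : ∀ i j : Fin (n+1), j ≠ i → (inner ℝ (A j - P) (Astar i - P) : ℝ) = 1 := by
    intro i j hij
    have hmem : A j ∈ affineSpan ℝ (A '' {i}ᶜ) :=
      subset_affineSpan ℝ _ ⟨j, by simpa using hij, rfl⟩
    have h := hpolar i
    have : A j ∈ {R : EuclideanSpace ℝ (Fin n) | inner ℝ (R - P) (Astar i - P) = (1:ℝ)} :=
      h ▸ hmem
    exact this
  -- diagonal inner products
  have diag : ∀ i : Fin (n+1), (inner ℝ (A i - P) (Astar i - P) : ℝ) = 1 - 1 / p i := by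
    intro i
    have hsum : ∑ j, p j • (A j - P) = 0 := by
      simp only [smul_sub]
      rw [Finset.sum_sub_distrib, ← Finset.sum_smul, hpsum, one_smul, ← hP, sub_self]
    have h0 : (inner ℝ (∑ j, p j • (A j - P)) (Astar i - P) : ℝ) = 0 := by
      rw [hsum, inner_zero_left]
    rw [sum_inner] at h0
    simp only [real_inner_smul_left] at h0
    rw [← Finset.sum_erase_add _ _ (Finset.mem_univ i)] at h0
    rw [Finset.sum_congr rfl (fun j hj => by
      rw [key i j (Finset.mem_erase.1 hj).1, mul_one])] at h0
    rw [Finset.sum_erase_eq_sub (Finset.mem_univ i), hpsum] at h0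
    have hpi := hp i
    set d : ℝ := inner ℝ (A i - P) (Astar i - P) with hd
    field_simp
    linarith
  -- inner products with Zstar
  have hAZ : ∀ j : Fin (n+1), (inner ℝ (A j - P) (Zstar - P) : ℝ) = 1 - z j / p j := by
    intro j
    have hZs : Zstar - P = ∑ i, z i • (Astar i - P) := by
      simp only [smul_sub]
      rw [Finset.sum_sub_distrib, ← Finset.sum_smul, hzsum, one_smul, ← hZ]
    rw [hZs, inner_sum]
    simp only [real_inner_smul_right]
    rw [← Finset.sum_erase_add _ _ (Finset.mem_univ j)]
    rw [Finset.sum_congr rfl (fun i hi => by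
      rw [key i j (Ne.symm (Finset.mem_erase.1 hi).1), mul_one])]
    rw [Finset.sum_erase_eq_sub (Finset.mem_univ j), hzsum, diag j]
    have hpj := hp j
    field_simp
    ring
  have hpt : (t • A 0 + (1 - t) • A 1) - P = t • (A 0 - P) + (1 - t) • (A 1 - P) := by
    module
  rw [hpt, inner_add_left, real_inner_smul_left, real_inner_smul_left, hAZ 0, hAZ 1]
  have hp0 := hp 0
  have hp1 := hp 1
  have hden : p 0 / z 0 - p 1 / z 1 ≠ 0 := sub_ne_zero.mpr hne
  rw [eq_div_iff hden]
  constructor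
  · intro h
    field_simp at h ⊢
    linear_combination h
  · intro h
    field_simp at h ⊢
    have h2 : (t * (p 0 * z 1 - z 0 * p 1)) * z 0 = (p 0 * z 1) * z 0 := by
      linear_combination z 0 * h
    have h3 := mul_right_cancel₀ hz0 h2
    linear_combination h3
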